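/- arXiv:1303.4673 — 3 statements merged into one kernel-verified Lean document; each statement's English description precedes it below -/
import Mathlib

section
/- Any geometric graph on n vertices (points in general position, edges as straight-line segments) with n+1 edges contains two disjoint edges (edges that neither share an endpoint nor cross). -/
open scoped Classical

abbrev Pt : Type := ℝ × ℝ

/-- No three distinct points of `S` are collinear. -/
def GenPos (S : Finset Pt) : Prop :=
  ∀ p ∈ S, ∀ q ∈ S, ∀ r ∈ S, p ≠ q → q ≠ r → p ≠ r → ¬ Collinear ℝ ({p, q, r} : Set Pt)

/-- The closed straight-line segment of an (unordered) edge. -/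
noncomputable def seg2 : Sym2 Pt → Set Pt :=
  Sym2.lift ⟨fun p q => segment ℝ p q, fun p q => segment_symm ℝ p q⟩

/-- Two edges intersect: they share a point (common endpoint or crossing). -/
def SInter (e f : Sym2 Pt) : Prop := (seg2 e ∩ seg2 f).Nonempty

/-- A geometric graph: vertices in general position, straight-line edges. -/
structure GeomGraph where
  verts : Finset Pt
  edges : Finset (Sym2 Pt)
  genpos : GenPos verts
  edge_mem : ∀ e ∈ edges, ∀ p ∈ e, p ∈ verts
  edge_ne : ∀ e ∈ edges, ¬ e.IsDiag

/-- A coloring is complete on edge set `E` if every pair of used colors appears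
on a pair of intersecting edges. -/
def CompleteOn (E : Finset (Sym2 Pt)) (c : Sym2 Pt → ℕ) : Prop :=
  ∀ i ∈ E.image c, ∀ j ∈ E.image c, i ≠ j →
    ∃ e ∈ E, ∃ f ∈ E, c e = i ∧ c f = j ∧ SInter e f

/-- A coloring is proper if same-colored edges are disjoint. -/
def ProperOn (E : Finset (Sym2 Pt)) (c : Sym2 Pt → ℕ) : Prop :=
  ∀ e ∈ E, ∀ f ∈ E, e ≠ f → c e = c f → ¬ SInter e f

/-- Points in convex position. -/
def ConvexPos (S : Finset Pt) : Prop :=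
  ∀ p ∈ S, p ∉ convexHull ℝ ((S : Set Pt) \ {p})

/-- Edge set of the complete geometric graph on `S`. -/
noncomputable def edgeSet (S : Finset Pt) : Finset (Sym2 Pt) :=
  S.sym2.filter (fun e => ¬ e.IsDiag)

def ShareEndpoint (e f : Sym2 Pt) : Prop := ∃ p : Pt, p ∈ e ∧ p ∈ f

def Crossing (e f : Sym2 Pt) : Prop := SInter e f ∧ ¬ ShareEndpoint e f

/-- Number of unordered pairs of distinct edges of `E` satisfying the
(symmetric) relation `P`. -/
noncomputable def pairCount (E : Finset (Sym2 Pt)) (P : Sym2 Pt → Sym2 Pt → Prop) : ℕ :=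
  ((E ×ˢ E).filter (fun q => q.1 ≠ q.2 ∧ P q.1 q.2)).card / 2

/-- The `k`-th vertex (clockwise) of the regular `n`-gon. -/
noncomputable def pt (n k : ℕ) : Pt :=
  (Real.cos (2 * Real.pi * k / n), -Real.sin (2 * Real.pi * k / n))

/-- Vertex set of the regular `n`-gon. -/
noncomputable def ngon (n : ℕ) : Finset Pt := (Finset.range n).image (pt n)

/-- `pq` is a halving edge of `S`: each open half-plane bounded by the line
through `p` and `q` contains at least `⌊(n-2)/2⌋` points of `S`. -/
def IsHalvingPts (S : Finset Pt) (p q : Pt) : Prop :=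
  (S.card - 2) / 2 ≤ (S.filter (fun r =>
      0 < (q.1 - p.1) * (r.2 - p.2) - (q.2 - p.2) * (r.1 - p.1))).card ∧
  (S.card - 2) / 2 ≤ (S.filter (fun r =>
      (q.1 - p.1) * (r.2 - p.2) - (q.2 - p.2) * (r.1 - p.1) < 0)).card

/-- The edge `e_{i,j}` of the regular `n`-gon is halving. -/
def Halving (n i j : ℕ) : Prop := IsHalvingPts (ngon n) (pt n i) (pt n j)

/-- The edges `e_{i,j}` and `e_{i',j'}` of the regular `n`-gon intersect. -/
def EInter (n i j i' j' : ℕ) : Prop :=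
  (segment ℝ (pt n i) (pt n j) ∩ segment ℝ (pt n i') (pt n j')).Nonempty

/-- `(e_{i,j}, e_{j+1,k})` is a halving pair. -/
def HalvingPair (n i j k : ℕ) : Prop :=
  pt n i ≠ pt n j ∧ pt n (j + 1) ≠ pt n k ∧ ¬ EInter n i j (j + 1) k ∧
  (Halving n i (j + 1) ∨ Halving n i k ∨ Halving n j k)

noncomputable def ocr (p q r : Pt) : ℝ :=
  (q.1 - p.1) * (r.2 - p.2) - (q.2 - p.2) * (r.1 - p.1)

lemma ocr_swap (p q r : Pt) : ocr q p r = - ocr p q r := by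
  simp only [ocr]; ring

lemma ocr_swap23 (p q r : Pt) : ocr p r q = - ocr p q r := by
  simp only [ocr]; ring

lemma collinear_of_ocr_eq_zero {p q r : Pt} (hpq : p ≠ q) (h : ocr p q r = 0) :
    Collinear ℝ ({p, q, r} : Set Pt) := by
  rw [collinear_iff_of_mem (Set.mem_insert p _)]
  refine ⟨q - p, ?_⟩
  intro x hx
  simp only [Set.mem_insert_iff, Set.mem_singleton_iff] at hx
  rcases hx with rfl | rfl | rfl
  · exact ⟨0, by simp⟩
  · exact ⟨1, by simp⟩
  · simp only [ocr] at h
    by_cases h1 : q.1 - p.1 = 0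
    · have h2 : q.2 - p.2 ≠ 0 := by
        intro h2
        exact hpq (Prod.ext (by linarith) (by linarith)).symm
      have hx1 : x.1 - p.1 = 0 := by
        have hz : (q.2 - p.2) * (x.1 - p.1) = 0 := by
          linear_combination (x.2 - p.2) * h1 - h
        rcases mul_eq_zero.1 hz with h' | h'
        · exact absurd h' h2
        · exact h'
      refine ⟨(x.2 - p.2) / (q.2 - p.2), ?_⟩
      rw [vadd_eq_add]
      apply Prod.ext
      · show x.1 = (((x.2 - p.2) / (q.2 - p.2)) • (q - p)).1 + p.1
        rw [Prod.smul_fst, Prod.fst_sub, smul_eq_mul]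
        rw [h1]; simp; linarith
      · show x.2 = (((x.2 - p.2) / (q.2 - p.2)) • (q - p)).2 + p.2
        rw [Prod.smul_snd, Prod.snd_sub, smul_eq_mul]
        field_simp
        ring
    · refine ⟨(x.1 - p.1) / (q.1 - p.1), ?_⟩
      rw [vadd_eq_add]
      apply Prod.ext
      · show x.1 = (((x.1 - p.1) / (q.1 - p.1)) • (q - p)).1 + p.1
        rw [Prod.smul_fst, Prod.fst_sub, smul_eq_mul]
        field_simp
        ring
      · show x.2 = (((x.1 - p.1) / (q.1 - p.1)) • (q - p)).2 + p.2
        rw [Prod.smul_snd, Prod.snd_sub, smul_eq_mul]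
        rw [eq_comm, div_mul_eq_mul_div]
        field_simp
        linear_combination -h

lemma seg2_mk (p q : Pt) : seg2 s(p, q) = segment ℝ p q := by
  simp [seg2]

lemma no_sinter {u v a b : Pt} (huv : u ≠ v)
    (ha : ocr u v a < 0) (hb : 0 < ocr u v b) :
    ¬ SInter s(u, a) s(v, b) := by
  rintro ⟨p, hp1, hp2⟩
  rw [seg2_mk] at hp1 hp2
  obtain ⟨s, t, hs, ht, hst, hp⟩ := hp1
  obtain ⟨s', t', hs', ht', hst', hp'⟩ := hp2
  have e1 : p.1 = s * u.1 + t * a.1 := by rw [← hp]; simp [Prod.smul_fst]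
  have e2 : p.2 = s * u.2 + t * a.2 := by rw [← hp]; simp [Prod.smul_snd]
  have f1 : p.1 = s' * v.1 + t' * b.1 := by rw [← hp']; simp [Prod.smul_fst]
  have f2 : p.2 = s' * v.2 + t' * b.2 := by rw [← hp']; simp [Prod.smul_snd]
  have h1 : ocr u v p = t * ocr u v a := by
    simp only [ocr]
    rw [e1, e2]
    have hs1 : s = 1 - t := by linarith
    rw [hs1]; ring
  have h2 : ocr u v p = t' * ocr u v b := by
    simp only [ocr]
    rw [f1, f2]
    have hs1 : s' = 1 - t' := by linarith
    rw [hs1]; ring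
  have ht0 : t = 0 := by nlinarith
  have ht'0 : t' = 0 := by nlinarith
  apply huv
  have hpu : p = u := by
    have hs1 : s = 1 := by linarith
    apply Prod.ext
    · rw [e1, ht0, hs1]; ring
    · rw [e2, ht0, hs1]; ring
  have hpv : p = v := by
    have hs1 : s' = 1 := by linarith
    apply Prod.ext
    · rw [f1, ht'0, hs1]; ring
    · rw [f2, ht'0, hs1]; ring
  rw [← hpu, ← hpv]

/-- `u` together with `v` is "left-extreme": every other neighbor of `u` in `E`
is strictly to the left of the directed line `u v`. -/
def LExt (E : Finset (Sym2 Pt)) (u v : Pt) : Prop :=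
  ∀ x, s(u, x) ∈ E → x ≠ v → 0 < ocr u v x

noncomputable def chooseEnd (E : Finset (Sym2 Pt)) (e : Sym2 Pt) : Pt :=
  if LExt E (Quot.out e).1 (Quot.out e).2 then (Quot.out e).1 else (Quot.out e).2

lemma out_mk (e : Sym2 Pt) : s((Quot.out e).1, (Quot.out e).2) = e := Quot.out_eq e

lemma chooseEnd_spec (E : Finset (Sym2 Pt)) (e : Sym2 Pt) (he : e ∈ E)
    (key : ∀ u v : Pt, s(u, v) ∈ E → LExt E u v ∨ LExt E v u) :
    ∃ w, e = s(chooseEnd E e, w) ∧ LExt E (chooseEnd E e) w := by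
  set u := (Quot.out e).1 with hu
  set v := (Quot.out e).2 with hv
  have hout : s(u, v) = e := out_mk e
  by_cases hc : LExt E u v
  · have hce : chooseEnd E e = u := by rw [chooseEnd, if_pos hc]
    exact ⟨v, by rw [hce, hout], by rw [hce]; exact hc⟩
  · have hce : chooseEnd E e = v := by rw [chooseEnd, if_neg hc]
    rcases key u v (hout ▸ he) with h | h
    · exact absurd h hc
    · exact ⟨u, by rw [hce]; exact hout.symm.trans (Sym2.eq_swap), by rw [hce]; exact h⟩


/-- Any geometric graph on `n` vertices with `n+1` edges contains two disjoint edges. -/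
theorem erdos_disjoint_edges (G : GeomGraph) (n : ℕ)
    (hn : G.verts.card = n) (he : G.edges.card = n + 1) :
    ∃ e ∈ G.edges, ∃ f ∈ G.edges, e ≠ f ∧ ¬ SInter e f := by
  by_contra hcon
  push_neg at hcon
  have hne : ∀ u v x : Pt, u ∈ G.verts → v ∈ G.verts → x ∈ G.verts →
      u ≠ v → v ≠ x → u ≠ x → ocr u v x ≠ 0 := by
    intro u v x hu hv hx h1 h2 h3 h0
    exact G.genpos u hu v hv x hx h1 h2 h3 (collinear_of_ocr_eq_zero h1 h0)
  have hvm : ∀ u v : Pt, s(u, v) ∈ G.edges → u ∈ G.verts ∧ v ∈ G.verts ∧ u ≠ v := by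
    intro u v h
    refine ⟨G.edge_mem _ h u (Sym2.mem_mk_left u v),
      G.edge_mem _ h v (Sym2.mem_mk_right u v), fun hh => G.edge_ne _ h ?_⟩
    rw [Sym2.mk_isDiag_iff]; exact hh
  have key : ∀ u v : Pt, s(u, v) ∈ G.edges → LExt G.edges u v ∨ LExt G.edges v u := by
    intro u v huv
    obtain ⟨hu, hv, huvne⟩ := hvm u v huv
    by_contra hk
    push_neg at hk
    obtain ⟨hk1, hk2⟩ := hk
    rw [LExt] at hk1 hk2
    push_neg at hk1 hk2
    obtain ⟨a, ha1, ha2, ha3⟩ := hk1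
    obtain ⟨b, hb1, hb2, hb3⟩ := hk2
    obtain ⟨-, haV, huane⟩ := hvm u a ha1
    obtain ⟨-, hbV, hvbne⟩ := hvm v b hb1
    have hA : ocr u v a < 0 :=
      lt_of_le_of_ne ha3 (hne u v a hu hv haV huvne (Ne.symm ha2) huane)
    have hB : 0 < ocr u v b := by
      have h1 : ocr v u b = - ocr u v b := ocr_swap u v b
      have h2 : ocr u v b ≠ 0 := hne u v b hu hv hbV huvne hvbne (Ne.symm hb2)
      have h3 : 0 ≤ ocr u v b := by linarith
      exact lt_of_le_of_ne h3 (Ne.symm h2)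
    have hEne : s(u, a) ≠ s(v, b) := by
      intro hq
      rw [Sym2.eq_iff] at hq
      revert hq
      rintro (⟨h1, -⟩ | ⟨h1, -⟩)
      · exact huvne h1
      · exact hb2 h1.symm
    exact no_sinter huvne hA hB (hcon _ ha1 _ hb1 hEne)
  have hcard : G.edges.card ≤ G.verts.card := by
    apply Finset.card_le_card_of_injOn (chooseEnd G.edges)
    · intro e he'
      obtain ⟨w, hw, -⟩ := chooseEnd_spec G.edges e he' key
      have hm : chooseEnd G.edges e ∈ s(chooseEnd G.edges e, w) := Sym2.mem_mk_left _ _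
      rw [← hw] at hm
      exact G.edge_mem e he' _ hm
    · intro e1 h1 e2 h2 hFeq
      simp only [Finset.mem_coe] at h1 h2
      obtain ⟨w1, hw1, hL1⟩ := chooseEnd_spec G.edges e1 h1 key
      obtain ⟨w2, hw2, hL2⟩ := chooseEnd_spec G.edges e2 h2 key
      by_cases hww : w1 = w2
      · rw [hw1, hw2, hww, hFeq]
      · exfalso
        have p1 : 0 < ocr (chooseEnd G.edges e1) w1 w2 := by
          apply hL1 w2 _ (fun h => hww h.symm)
          rw [hFeq, ← hw2]; exact h2
        have p2 : 0 < ocr (chooseEnd G.edges e2) w2 w1 := by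
          apply hL2 w1 _ hww
          rw [← hFeq, ← hw1]; exact h1
        rw [← hFeq, ocr_swap23] at p2
        linarith
  rw [hn, he] at hcard
  omega
end

section
/- The pseudoachromatic index of any geometric graph of order n is at most floor((n^2+n)/4). -/
open scoped Classical

/-! ### Auxiliary: the cross product / orientation function -/

/-- Cross product of `p - u` and `q - u`. -/
def crossP (u p q : Pt) : ℝ := (p.1 - u.1) * (q.2 - u.2) - (p.2 - u.2) * (q.1 - u.1)

lemma crossP_swap (u p q : Pt) : crossP u q p = - crossP u p q := by
  unfold crossP; ring

lemma crossP_rev (u v b : Pt) : crossP v u b = - crossP u v b := by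
  unfold crossP; ring

/-- If `crossP u v w = 0` then the three points are collinear. -/
lemma collinear_of_crossP_eq_zero {u v w : Pt} (huv : u ≠ v)
    (h0 : crossP u v w = 0) : Collinear ℝ ({u, v, w} : Set Pt) := by
  have key : ∃ r : ℝ, w = r • (v - u) +ᵥ u := by
    unfold crossP at h0
    by_cases h1 : v.1 - u.1 = 0
    · have h2 : v.2 - u.2 ≠ 0 := by
        intro h2
        exact huv (Prod.ext (by linarith) (by linarith))
      refine ⟨(w.2 - u.2) / (v.2 - u.2), ?_⟩
      have hw1 : w.1 - u.1 = 0 := by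
        rcases mul_eq_zero.1 (show (v.2 - u.2) * (w.1 - u.1) = 0 by
          linear_combination (w.2 - u.2) * h1 - h0) with h | h
        exacts [absurd h h2, h]
      apply Prod.ext
      · simp only [vadd_eq_add, Prod.fst_add, Prod.smul_fst, Prod.fst_sub, smul_eq_mul]
        rw [h1]; simp; linarith
      · simp only [vadd_eq_add, Prod.snd_add, Prod.smul_snd, Prod.snd_sub, smul_eq_mul]
        field_simp
        ring
    · refine ⟨(w.1 - u.1) / (v.1 - u.1), ?_⟩
      apply Prod.ext
      · simp only [vadd_eq_add, Prod.fst_add, Prod.smul_fst, Prod.fst_sub, smul_eq_mul]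
        field_simp
        ring
      · simp only [vadd_eq_add, Prod.snd_add, Prod.smul_snd, Prod.snd_sub, smul_eq_mul]
        have hkey : w.2 - u.2 = (w.1 - u.1) / (v.1 - u.1) * (v.2 - u.2) := by
          field_simp
          nlinarith [h0]
        linarith
  obtain ⟨r, hr⟩ := key
  rw [collinear_iff_of_mem (Set.mem_insert u {v, w})]
  refine ⟨v - u, fun p hp => ?_⟩
  simp only [Set.mem_insert_iff, Set.mem_singleton_iff] at hp
  rcases hp with rfl | rfl | rfl
  · exact ⟨0, by simp⟩
  · exact ⟨1, by simp⟩
  · exact ⟨r, hr⟩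

lemma crossP_ne_of_genpos {S : Finset Pt} (hS : GenPos S) {u v w : Pt}
    (hu : u ∈ S) (hv : v ∈ S) (hw : w ∈ S)
    (huv : u ≠ v) (hvw : v ≠ w) (huw : u ≠ w) : crossP u v w ≠ 0 := by
  intro h0
  exact hS u hu v hv w hw huv hvw huw (collinear_of_crossP_eq_zero huv h0)

/-- Affinity of `crossP u v ·` along a segment. -/
lemma crossP_seg {u v p q : Pt} (hp : crossP u v p = 0) {z : Pt}
    (hz : z ∈ segment ℝ p q) :
    ∃ t : ℝ, 0 ≤ t ∧ crossP u v z = t * crossP u v q ∧ (t = 0 → z = p) := by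
  rw [segment_eq_image] at hz
  obtain ⟨t, ht, rfl⟩ := hz
  refine ⟨t, ht.1, ?_, ?_⟩
  · unfold crossP at hp ⊢
    simp only [Prod.fst_add, Prod.snd_add, Prod.smul_fst, Prod.smul_snd, smul_eq_mul]
    linear_combination (1 - t) * hp
  · rintro rfl
    simp

/-- `p` is the extreme (clockwise-most) neighbor of `u` within `T`. -/
def ExtAt (T : Finset (Sym2 Pt)) (u p : Pt) : Prop :=
  ∀ q : Pt, s(u, q) ∈ T → q ≠ p → 0 < crossP u p q

/-- Perles' argument: a family of pairwise intersecting segments on a point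
set in general position has at most as many members as points. -/
lemma thrackle_bound (S : Finset Pt) (hS : GenPos S) (T : Finset (Sym2 Pt))
    (hmem : ∀ e ∈ T, ∀ p ∈ e, p ∈ S) (hnd : ∀ e ∈ T, ¬ e.IsDiag)
    (hint : ∀ e ∈ T, ∀ f ∈ T, e ≠ f → SInter e f) : T.card ≤ S.card := by
  -- every edge is extreme at one of its endpoints
  have claim1 : ∀ u v : Pt, s(u, v) ∈ T → ExtAt T u v ∨ ExtAt T v u := by
    intro u v he
    by_contra hcon
    push_neg at hcon
    obtain ⟨h1, h2⟩ := hcon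
    unfold ExtAt at h1 h2
    push_neg at h1 h2
    obtain ⟨a, haT, hav, ha⟩ := h1
    obtain ⟨b, hbT, hbu, hb⟩ := h2
    have huv : u ≠ v := by
      intro h; exact hnd _ he (by rw [h]; exact Sym2.mk_isDiag_iff.2 rfl)
    have hua : u ≠ a := by
      intro h; exact hnd _ haT (by rw [h]; exact Sym2.mk_isDiag_iff.2 rfl)
    have hvb : v ≠ b := by
      intro h; exact hnd _ hbT (by rw [h]; exact Sym2.mk_isDiag_iff.2 rfl)
    have hu : u ∈ S := hmem _ he _ (Sym2.mem_mk_left u v)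
    have hv : v ∈ S := hmem _ he _ (Sym2.mem_mk_right u v)
    have haS : a ∈ S := hmem _ haT _ (Sym2.mem_mk_right u a)
    have hbS : b ∈ S := hmem _ hbT _ (Sym2.mem_mk_right v b)
    have ca : crossP u v a < 0 := by
      have hne := crossP_ne_of_genpos hS hu hv haS huv (Ne.symm hav) hua
      exact lt_of_le_of_ne ha hne
    have cb : 0 < crossP u v b := by
      have hne := crossP_ne_of_genpos hS hv hu hbS (Ne.symm huv) (Ne.symm hbu) hvb
      have hlt : crossP v u b < 0 := lt_of_le_of_ne hb hne
      have := crossP_rev u v b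
      linarith
    have hedne : s(u, a) ≠ s(v, b) := by
      intro h
      rcases Sym2.eq_iff.mp h with ⟨rfl, rfl⟩ | ⟨rfl, rfl⟩
      · exact huv rfl
      · exact hav rfl
    obtain ⟨z, hz1, hz2⟩ := hint _ haT _ hbT hedne
    have hz1' : z ∈ segment ℝ u a := by
      simpa only [seg2, Sym2.lift_mk] using hz1
    have hz2' : z ∈ segment ℝ v b := by
      simpa only [seg2, Sym2.lift_mk] using hz2
    have h0u : crossP u v u = 0 := by unfold crossP; ring
    have h0v : crossP u v v = 0 := by unfold crossP; ring
    obtain ⟨t, ht0, htz, htu⟩ := crossP_seg h0u hz1'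
    obtain ⟨s, hs0, hsz, hsv⟩ := crossP_seg h0v hz2'
    have hts : t * crossP u v a = s * crossP u v b := by rw [← htz, ← hsz]
    have ht : t = 0 := by nlinarith
    have hs : s = 0 := by nlinarith
    exact huv ((htu ht).symm.trans (hsv hs))
  -- existence of an extreme representation for every edge of `T`
  have hex : ∀ e ∈ T, ∃ u v : Pt, e = s(u, v) ∧ ExtAt T u v := by
    intro e he
    induction e using Sym2.ind with
    | _ u v =>
      rcases claim1 u v he with h | h
      · exact ⟨u, v, rfl, h⟩
      · exact ⟨v, u, Sym2.eq_swap, h⟩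
  -- the injection
  classical
  set f : Sym2 Pt → Pt := fun e =>
    if ExtAt T (Quot.out e).1 (Quot.out e).2 then (Quot.out e).1 else (Quot.out e).2 with hf
  have hout : ∀ e : Sym2 Pt, e = s((Quot.out e).1, (Quot.out e).2) := by
    intro e
    exact (Quot.out_eq e).symm
  have hkey : ∀ e ∈ T, ∃ p : Pt, e = s(f e, p) ∧ ExtAt T (f e) p := by
    intro e he
    by_cases h : ExtAt T (Quot.out e).1 (Quot.out e).2
    · have hfe : f e = (Quot.out e).1 := by rw [hf]; exact if_pos h
      exact ⟨(Quot.out e).2, by rw [hfe]; exact hout e, by rw [hfe]; exact h⟩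
    · have hfe : f e = (Quot.out e).2 := by rw [hf]; exact if_neg h
      have hmemT : s((Quot.out e).1, (Quot.out e).2) ∈ T := by rw [← hout e]; exact he
      rcases claim1 _ _ hmemT with h' | h'
      · exact absurd h' h
      · refine ⟨(Quot.out e).1, ?_, by rw [hfe]; exact h'⟩
        rw [hfe, ← Sym2.eq_swap]
        exact hout e
  apply Finset.card_le_card_of_injOn f
  · intro e he
    obtain ⟨p, heq, -⟩ := hkey e he
    have h1 : f e ∈ s(f e, p) := Sym2.mem_mk_left _ _
    rw [← heq] at h1
    exact hmem _ he _ h1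
  · intro e1 he1 e2 he2 hfeq
    simp only [Finset.mem_coe] at he1 he2
    by_contra hne
    obtain ⟨p, hp1, hp2⟩ := hkey e1 he1
    obtain ⟨q, hq1, hq2⟩ := hkey e2 he2
    rw [hfeq] at hp1 hp2
    have hpq : p ≠ q := by
      rintro rfl
      exact hne (hp1.trans hq1.symm)
    have h1 : 0 < crossP (f e2) p q := hp2 q (hq1 ▸ he2) (Ne.symm hpq)
    have h2 : 0 < crossP (f e2) q p := hq2 p (hp1 ▸ he1) hpq
    have := crossP_swap (f e2) p q
    linarith

/-- The pseudoachromatic index of any geometric graph of order `n` is at most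
`⌊(n² + n)/4⌋`. -/
theorem pseudoachromatic_upper (G : GeomGraph) (c : Sym2 Pt → ℕ)
    (hc : CompleteOn G.edges c) :
    (G.edges.image c).card ≤ (G.verts.card ^ 2 + G.verts.card) / 4 := by
  classical
  set S := G.verts with hSdef
  set E := G.edges with hEdef
  set n := S.card with hn
  set C := E.image c with hC
  set k := C.card with hk
  -- fibers
  have hfib_sum : E.card = ∑ i ∈ C, (E.filter fun e => c e = i).card :=
    Finset.card_eq_sum_card_fiberwise (fun e he => Finset.mem_image_of_mem c he)
  set Cs := C.filter (fun i => (E.filter fun e => c e = i).card = 1) with hCs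
  -- 2k ≤ m + t
  have h2k : 2 * k ≤ E.card + Cs.card := by
    have hbound : ∀ i ∈ C, 2 ≤ (E.filter fun e => c e = i).card +
        (if (E.filter fun e => c e = i).card = 1 then 1 else 0) := by
      intro i hi
      obtain ⟨e, he, hce⟩ := Finset.mem_image.1 hi
      have h1 : 1 ≤ (E.filter fun e => c e = i).card := by
        refine Finset.card_pos.2 ⟨e, ?_⟩
        exact Finset.mem_filter.2 ⟨he, hce⟩
      by_cases h : (E.filter fun e => c e = i).card = 1
      · simp [h]
      · simp only [h, if_false]; omega
    calc 2 * k = ∑ _i ∈ C, 2 := by rw [Finset.sum_const, smul_eq_mul, mul_comm]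
    _ ≤ ∑ i ∈ C, ((E.filter fun e => c e = i).card +
        (if (E.filter fun e => c e = i).card = 1 then 1 else 0)) :=
        Finset.sum_le_sum hbound
    _ = E.card + Cs.card := by
        rw [Finset.sum_add_distrib, ← hfib_sum, hCs, Finset.card_filter]
  -- singleton-color edges
  set T := E.filter (fun e => (E.filter fun f => c f = c e).card = 1) with hT
  have hCsT : Cs.card ≤ T.card := by
    have hsub : Cs ⊆ T.image c := by
      intro i hi
      obtain ⟨hiC, hcard⟩ := Finset.mem_filter.1 hi
      obtain ⟨e, he⟩ := Finset.card_eq_one.1 hcard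
      have heE : e ∈ E.filter fun f => c f = i := he ▸ Finset.mem_singleton_self e
      obtain ⟨heE', hcei⟩ := Finset.mem_filter.1 heE
      have heT : e ∈ T := by
        rw [hT]; exact Finset.mem_filter.2 ⟨heE', by rw [hcei]; exact hcard⟩
      exact Finset.mem_image.2 ⟨e, heT, hcei⟩
    calc Cs.card ≤ (T.image c).card := Finset.card_le_card hsub
    _ ≤ T.card := Finset.card_image_le
  -- T is pairwise intersecting
  have hTsub : T ⊆ E := Finset.filter_subset _ _
  have hTint : ∀ e ∈ T, ∀ f ∈ T, e ≠ f → SInter e f := by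
    intro e he f hf hef
    obtain ⟨heE, hecard⟩ := Finset.mem_filter.1 he
    obtain ⟨hfE, hfcard⟩ := Finset.mem_filter.1 hf
    have hcef : c e ≠ c f := by
      intro h
      apply hef
      have he' : e ∈ E.filter fun g => c g = c e := Finset.mem_filter.2 ⟨heE, rfl⟩
      have hf' : f ∈ E.filter fun g => c g = c e := Finset.mem_filter.2 ⟨hfE, h.symm⟩
      exact Finset.card_le_one.1 (le_of_eq hecard) e he' f hf'
    obtain ⟨e', he'E, f', hf'E, hce', hcf', hint⟩ :=
      hc (c e) (Finset.mem_image_of_mem c heE) (c f) (Finset.mem_image_of_mem c hfE) hcef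
    have hee : e' = e := by
      have he1 : e' ∈ E.filter fun g => c g = c e := Finset.mem_filter.2 ⟨he'E, hce'⟩
      have he2 : e ∈ E.filter fun g => c g = c e := Finset.mem_filter.2 ⟨heE, rfl⟩
      exact Finset.card_le_one.1 (le_of_eq hecard) e' he1 e he2
    have hff : f' = f := by
      have hf1 : f' ∈ E.filter fun g => c g = c f := Finset.mem_filter.2 ⟨hf'E, hcf'⟩
      have hf2 : f ∈ E.filter fun g => c g = c f := Finset.mem_filter.2 ⟨hfE, rfl⟩
      exact Finset.card_le_one.1 (le_of_eq hfcard) f' hf1 f hf2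
    rw [← hee, ← hff]
    exact hint
  -- thrackle bound
  have hTn : T.card ≤ n := by
    apply thrackle_bound S G.genpos T
    · intro e he p hp
      exact G.edge_mem e (hTsub he) p hp
    · intro e he
      exact G.edge_ne e (hTsub he)
    · exact hTint
  -- edge count: 2 * E.card ≤ n * n - n
  have hE2 : 2 * E.card ≤ n * n - n := by
    set B := S.offDiag.filter (fun p : Pt × Pt => Sym2.mk p.1 p.2 ∈ E) with hB
    have hBsum : B.card = ∑ e ∈ E, (B.filter fun p => Sym2.mk p.1 p.2 = e).card := by
      apply Finset.card_eq_sum_card_fiberwise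
      intro p hp
      exact (Finset.mem_filter.1 hp).2
    have hBfib : ∀ e ∈ E, (B.filter fun p => Sym2.mk p.1 p.2 = e).card = 2 := by
      intro e he
      induction e using Sym2.ind with
      | _ u v =>
        have huv : u ≠ v := fun h => G.edge_ne _ he (by rw [h]; exact Sym2.mk_isDiag_iff.2 rfl)
        have hu : u ∈ S := G.edge_mem _ he _ (Sym2.mem_mk_left u v)
        have hv : v ∈ S := G.edge_mem _ he _ (Sym2.mem_mk_right u v)
        have : (B.filter fun p => Sym2.mk p.1 p.2 = s(u, v)) = {(u, v), (v, u)} := by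
          ext ⟨a, b⟩
          simp only [Finset.mem_filter, hB, Finset.mem_offDiag, Finset.mem_insert,
            Finset.mem_singleton, Prod.mk.injEq]
          constructor
          · rintro ⟨⟨_, hmk⟩, heq⟩
            rcases Sym2.eq_iff.1 heq with ⟨rfl, rfl⟩ | ⟨rfl, rfl⟩
            · left; exact ⟨rfl, rfl⟩
            · right; exact ⟨rfl, rfl⟩
          · rintro (⟨rfl, rfl⟩ | ⟨rfl, rfl⟩)
            · exact ⟨⟨⟨hu, hv, huv⟩, he⟩, rfl⟩
            · exact ⟨⟨⟨hv, hu, Ne.symm huv⟩, by rwa [Sym2.eq_swap]⟩, Sym2.eq_swap⟩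
        rw [this]
        rw [Finset.card_insert_of_notMem, Finset.card_singleton]
        simp only [Finset.mem_singleton, Prod.mk.injEq, not_and]
        intro h; exact absurd h huv
    have hBcard : B.card = 2 * E.card := by
      rw [hBsum, Finset.sum_congr rfl hBfib, Finset.sum_const, smul_eq_mul, mul_comm]
    have hBle : B.card ≤ n * n - n := by
      calc B.card ≤ S.offDiag.card := Finset.card_le_card (Finset.filter_subset _ _)
      _ = n * n - n := Finset.offDiag_card S
    omega
  -- conclude
  have hnn : n ≤ n * n := by nlinarith [sq_nonneg n]
  rw [Nat.le_div_iff_mul_le (by norm_num : 0 < 4)]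
  have hsq : n ^ 2 = n * n := sq n
  rw [hsq]
  generalize hM : n * n = M at hnn hE2 ⊢
  omega
end

section
/- In a complete convex geometric graph of order n, any halving edge intersects any halving pair of edges, and any two halving pairs intersect (there is an edge of one pair intersecting an edge of the other). -/
open scoped Classical

/- ===================== auxiliary machinery ===================== -/

/-- Signed area (cross product) of the triangle `P Q R`. -/
noncomputable def cr (P Q R : Pt) : ℝ := (Q.1 - P.1) * (R.2 - P.2) - (Q.2 - P.2) * (R.1 - P.1)

lemma cr_swap (P Q R : Pt) : cr P Q R = - cr Q P R := by unfold cr; ring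
lemma cr_cyc (P Q R : Pt) : cr P Q R = cr Q R P := by unfold cr; ring
lemma cr_swap23 (P Q R : Pt) : cr P Q R = - cr P R Q := by unfold cr; ring
lemma cr_self1 (P Q : Pt) : cr P Q P = 0 := by unfold cr; ring
lemma cr_self2 (P Q : Pt) : cr P Q Q = 0 := by unfold cr; ring
lemma cr_degen (P R : Pt) : cr P P R = 0 := by unfold cr; ring

lemma cr_comb {u v : ℝ} (P Q X Y : Pt) (h : u + v = 1) :
    cr P Q (u • X + v • Y) = u * cr P Q X + v * cr P Q Y := by
  have hv : v = 1 - u := by linarith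
  subst hv
  simp only [cr, Prod.fst_add, Prod.snd_add, Prod.smul_fst, Prod.smul_snd, smul_eq_mul]
  ring

lemma mem_seg {A B P : Pt} {t : ℝ} (h0 : 0 ≤ t) (h1 : t ≤ 1)
    (hP : P = (1 - t) • A + t • B) : P ∈ segment ℝ A B :=
  ⟨1 - t, t, by linarith, h0, by ring, hP.symm⟩

lemma cross_seg {A B C D : Pt} (h1 : 0 < cr A B C) (h2 : cr A B D < 0)
    (h3 : cr C D A < 0) (h4 : 0 < cr C D B) :
    (segment ℝ A B ∩ segment ℝ C D).Nonempty := by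
  have key : cr C D A - cr C D B = -(cr A B C - cr A B D) := by unfold cr; ring
  set γ := cr A B C with hγ
  set δ := cr A B D with hδ
  set α := cr C D A with hα
  set β := cr C D B with hβ
  have hΔ : 0 < γ - δ := by linarith
  set s : ℝ := (-α) / (γ - δ) with hs
  set t : ℝ := γ / (γ - δ) with ht
  have hs0 : 0 ≤ s := by
    rw [hs]; apply div_nonneg <;> linarith
  have hs1 : s ≤ 1 := by
    rw [hs, div_le_one hΔ]; linarith
  have ht0 : 0 ≤ t := by positivity
  have ht1 : t ≤ 1 := by
    rw [ht, div_le_one hΔ]; linarith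
  have heq : (1 - s) • A + s • B = (1 - t) • C + t • D := by
    have hgd : γ - δ ≠ 0 := ne_of_gt hΔ
    have hsd : s * (γ - δ) = -α := div_mul_cancel₀ _ hgd
    have htd : t * (γ - δ) = γ := div_mul_cancel₀ _ hgd
    have key1 : (γ - δ + α) * A.1 - α * B.1 + δ * C.1 - γ * D.1 = 0 := by
      simp only [hγ, hδ, hα, cr]; ring
    have key2 : (γ - δ + α) * A.2 - α * B.2 + δ * C.2 - γ * D.2 = 0 := by
      simp only [hγ, hδ, hα, cr]; ring
    have e1 : ((1 - s) • A + s • B : Pt).1 = ((1 - t) • C + t • D).1 := by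
      apply mul_left_cancel₀ hgd
      simp only [Prod.fst_add, Prod.smul_fst, smul_eq_mul]
      linear_combination key1 + (B.1 - A.1) * hsd - (D.1 - C.1) * htd
    have e2 : ((1 - s) • A + s • B : Pt).2 = ((1 - t) • C + t • D).2 := by
      apply mul_left_cancel₀ hgd
      simp only [Prod.snd_add, Prod.smul_snd, smul_eq_mul]
      linear_combination key2 + (B.2 - A.2) * hsd - (D.2 - C.2) * htd
    exact Prod.ext e1 e2
  refine ⟨(1 - s) • A + s • B, mem_seg hs0 hs1 rfl, mem_seg ht0 ht1 heq⟩

lemma seg_disjoint {A B C D : Pt} (h1 : 0 < cr A B C) (h2 : 0 < cr A B D) :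
    ¬ (segment ℝ A B ∩ segment ℝ C D).Nonempty := by
  rintro ⟨x, ⟨u, v, hu, hv, huv, hx⟩, ⟨u', v', hu', hv', huv', hx'⟩⟩
  have e1 : cr A B x = 0 := by
    rw [← hx, cr_comb _ _ _ _ huv, cr_self1, cr_self2]; ring
  have e2 : 0 < cr A B x := by
    rw [← hx', cr_comb _ _ _ _ huv']
    rcases eq_or_lt_of_le hu' with h | h
    · nlinarith
    · nlinarith
  linarith

lemma sin_ident (x y : ℝ) : Real.sin x + Real.sin y - Real.sin (x + y) =
    4 * Real.sin ((x + y) / 2) * Real.sin (x / 2) * Real.sin (y / 2) := by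
  have h1 : Real.sin x + Real.sin y = 2 * Real.sin ((x + y) / 2) * Real.cos ((x - y) / 2) := by
    have := Real.sin_sub_sin x (-y)
    rw [Real.sin_neg, sub_neg_eq_add, show (x - -y) / 2 = (x + y) / 2 by ring,
        show (x + -y) / 2 = (x - y) / 2 by ring] at this
    linarith
  have h2 : Real.sin (x + y) = 2 * Real.sin ((x + y) / 2) * Real.cos ((x + y) / 2) := by
    rw [← Real.sin_two_mul]; ring_nf
  have h3 := Real.cos_sub_cos ((x - y) / 2) ((x + y) / 2)
  rw [show ((x - y) / 2 + (x + y) / 2) / 2 = x / 2 by ring,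
      show ((x - y) / 2 - (x + y) / 2) / 2 = -(y / 2) by ring, Real.sin_neg] at h3
  linear_combination h1 - h2 + (2 * Real.sin ((x + y) / 2)) * h3

lemma sin_arc_pos {n a b : ℕ} (hab : a < b) (hbn : b < n) :
    0 < Real.sin ((2 * Real.pi * b / n - 2 * Real.pi * a / n) / 2) := by
  have hn : (0:ℝ) < n := by exact_mod_cast (by omega : 0 < n)
  have hab' : (a:ℝ) < b := by exact_mod_cast hab
  have hbn' : (b:ℝ) < n := by exact_mod_cast hbn
  have ha0 : (0:ℝ) ≤ a := Nat.cast_nonneg a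
  have pi_pos := Real.pi_pos
  apply Real.sin_pos_of_pos_of_lt_pi
  · rw [show (2 * Real.pi * b / n - 2 * Real.pi * a / n) / 2 = Real.pi * ((b - a) / n) by ring]
    have : (0:ℝ) < (b - a) / n := by apply div_pos <;> linarith
    nlinarith
  · rw [show (2 * Real.pi * b / n - 2 * Real.pi * a / n) / 2 = Real.pi * ((b - a) / n) by ring]
    have h1 : ((b:ℝ) - a) / n < 1 := by rw [div_lt_one hn]; linarith
    nlinarith

lemma cr_pt_neg {n i j k : ℕ} (hij : i < j) (hjk : j < k) (hkn : k < n) :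
    cr (pt n i) (pt n j) (pt n k) < 0 := by
  set θi := 2 * Real.pi * i / n with hθi
  set θj := 2 * Real.pi * j / n with hθj
  set θk := 2 * Real.pi * k / n with hθk
  have expand : cr (pt n i) (pt n j) (pt n k) =
      -(Real.sin (θj - θi) + Real.sin (θk - θj) - Real.sin (θk - θi)) := by
    simp only [pt, cr, Real.sin_sub, Real.cos_sub]
    ring
  have hid := sin_ident (θj - θi) (θk - θj)
  rw [show θj - θi + (θk - θj) = θk - θi by ring] at hid
  have s1 : 0 < Real.sin ((θk - θi) / 2) := sin_arc_pos (lt_trans hij hjk) hkn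
  have s2 : 0 < Real.sin ((θj - θi) / 2) := sin_arc_pos hij (lt_trans hjk hkn)
  have s3 : 0 < Real.sin ((θk - θj) / 2) := sin_arc_pos hjk hkn
  rw [expand, hid]
  nlinarith [mul_pos (mul_pos s1 s2) s3]

/-- cyclic distance from `x` to `y` (clockwise), for `x y < n`. -/
def rr (n x y : ℕ) : ℕ := if x ≤ y then y - x else y + n - x

/-- `z` lies strictly inside the clockwise arc from `x` to `y`. -/
def BtwA (n x y z : ℕ) : Prop := 0 < rr n x z ∧ rr n x z < rr n x y

/-- position-level strict containment in a cyclic interval -/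
def inA (P Q R : ℕ) : Prop := (P < R ∧ R < Q) ∨ (Q < P ∧ P < R) ∨ (R < Q ∧ Q < P)

lemma btw_pos {n i x y z : ℕ} (hi : i < n) (hx : x < n) (hy : y < n) (hz : z < n) :
    BtwA n x y z ↔ inA (rr n i x) (rr n i y) (rr n i z) := by
  simp only [BtwA, inA, rr]; split_ifs <;> omega

lemma rr_lt {n x y : ℕ} (hx : x < n) (hy : y < n) : rr n x y < n := by
  simp only [rr]; split_ifs <;> omega
lemma rr_self (n x : ℕ) : rr n x x = 0 := by simp [rr]
lemma rr_eq_iff {n x y z : ℕ} (hx : x < n) (hy : y < n) (hz : z < n) :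
    rr n x y = rr n x z ↔ y = z := by
  simp only [rr]; split_ifs <;> omega
lemma rr_zero_iff {n x y : ℕ} (hx : x < n) (hy : y < n) : rr n x y = 0 ↔ x = y := by
  simp only [rr]; split_ifs <;> omega

lemma cr_pos_iff {n i j k : ℕ} (hi : i < n) (hj : j < n) (hk : k < n) :
    0 < cr (pt n i) (pt n j) (pt n k) ↔ BtwA n i j k := by
  by_cases hij : i = j
  · subst hij
    simp only [cr_degen, BtwA, rr]
    constructor
    · intro h; linarith
    · rintro ⟨h1, h2⟩; split_ifs at h2 <;> omega
  by_cases hki : k = i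
  · subst hki
    rw [cr_self1]
    simp only [BtwA, rr]
    constructor
    · intro h; linarith
    · rintro ⟨h1, h2⟩; split_ifs at h1 <;> omega
  by_cases hkj : k = j
  · subst hkj
    rw [cr_self2]
    simp only [BtwA, rr]
    constructor
    · intro h; linarith
    · rintro ⟨h1, h2⟩; omega
  have horder : (i < j ∧ j < k) ∨ (i < k ∧ k < j) ∨ (j < i ∧ i < k) ∨ (j < k ∧ k < i) ∨
      (k < i ∧ i < j) ∨ (k < j ∧ j < i) := by omega
  rcases horder with ⟨h1,h2⟩|⟨h1,h2⟩|⟨h1,h2⟩|⟨h1,h2⟩|⟨h1,h2⟩|⟨h1,h2⟩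
  · have hc := cr_pt_neg h1 h2 hk
    apply iff_of_false (by linarith)
    simp only [BtwA, rr]; split_ifs <;> omega
  · have hc := cr_pt_neg h1 h2 hj
    rw [cr_swap23] at hc
    apply iff_of_true (by linarith)
    simp only [BtwA, rr]; split_ifs <;> omega
  · have hc := cr_pt_neg h1 h2 hk
    rw [show cr (pt n j) (pt n i) (pt n k) = - cr (pt n i) (pt n j) (pt n k) from cr_swap _ _ _] at hc
    apply iff_of_true (by linarith)
    simp only [BtwA, rr]; split_ifs <;> omega
  · have hc := cr_pt_neg h1 h2 hi
    rw [cr_cyc, cr_cyc] at hc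
    apply iff_of_false (by linarith)
    simp only [BtwA, rr]; split_ifs <;> omega
  · have hc := cr_pt_neg h1 h2 hj
    rw [cr_cyc] at hc
    apply iff_of_false (by linarith)
    simp only [BtwA, rr]; split_ifs <;> omega
  · have hc := cr_pt_neg h1 h2 hi
    rw [cr_cyc] at hc
    rw [show cr (pt n j) (pt n i) (pt n k) = - cr (pt n i) (pt n j) (pt n k) from cr_swap _ _ _] at hc
    apply iff_of_true (by linarith)
    simp only [BtwA, rr]; split_ifs <;> omega

lemma cr_neg_iff {n i j k : ℕ} (hi : i < n) (hj : j < n) (hk : k < n) :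
    cr (pt n i) (pt n j) (pt n k) < 0 ↔ BtwA n j i k := by
  rw [← cr_pos_iff hj hi hk, cr_swap]; constructor <;> intro <;> linarith

lemma btw_trichotomy {n x y z : ℕ} (hx : x < n) (hy : y < n) (hz : z < n)
    (hxy : x ≠ y) (hzx : z ≠ x) (hzy : z ≠ y) : BtwA n x y z ∨ BtwA n y x z := by
  simp only [BtwA, rr]; split_ifs <;> omega

lemma pt_inj {n x y : ℕ} (hn : 3 ≤ n) (hx : x < n) (hy : y < n)
    (h : pt n x = pt n y) : x = y := by
  by_contra hxy
  obtain ⟨z, hz, hzx, hzy⟩ : ∃ z, z < n ∧ z ≠ x ∧ z ≠ y := by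
    rcases (show (0:ℕ) ≠ x ∧ 0 ≠ y ∨ 1 ≠ x ∧ 1 ≠ y ∨ 2 ≠ x ∧ 2 ≠ y by omega) with h|h|h
    exacts [⟨0, by omega, h.1, h.2⟩, ⟨1, by omega, h.1, h.2⟩, ⟨2, by omega, h.1, h.2⟩]
  have hne : cr (pt n x) (pt n y) (pt n z) ≠ 0 := by
    rcases btw_trichotomy hx hy hz hxy hzx hzy with hb | hb
    · have := (cr_pos_iff hx hy hz).2 hb; linarith
    · have := (cr_neg_iff hx hy hz).2 hb; linarith
  rw [h, cr_degen] at hne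
  exact hne rfl

lemma ngon_card {n : ℕ} (hn : 3 ≤ n) : (ngon n).card = n := by
  rw [ngon, Finset.card_image_of_injOn, Finset.card_range]
  intro x hx y hy h
  exact pt_inj hn (Finset.mem_range.1 hx) (Finset.mem_range.1 hy) h

lemma filter_ngon {n : ℕ} (hn : 3 ≤ n) (p : Pt → Prop) :
    ((ngon n).filter p).card = ((Finset.range n).filter (fun k => p (pt n k))).card := by
  rw [ngon, Finset.filter_image]
  rw [Finset.card_image_of_injOn]
  intro x hx y hy h
  have hx' := Finset.mem_range.1 (Finset.mem_filter.1 hx).1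
  have hy' := Finset.mem_range.1 (Finset.mem_filter.1 hy).1
  exact pt_inj hn hx' hy' h

lemma card_btw {n i j : ℕ} (hi : i < n) (hj : j < n) :
    ((Finset.range n).filter (fun k => BtwA n i j k)).card = rr n i j - 1 := by
  have h := Finset.card_nbij' (s := (Finset.range n).filter (fun k => BtwA n i j k))
    (t := Finset.Ioo 0 (rr n i j)) (fun k => rr n i k)
    (fun z => if i + z < n then i + z else i + z - n)
    ?_ ?_ ?_ ?_
  · rw [h, Nat.card_Ioo]; omega
  · intro a ha
    simp only [Finset.mem_coe, Finset.mem_filter] at *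
    simp only [Finset.mem_filter, Finset.mem_range, Finset.mem_Ioo, BtwA, rr] at *
    split_ifs at * <;> omega
  · intro a ha
    simp only [Finset.mem_coe, Finset.mem_filter] at *
    simp only [Finset.mem_filter, Finset.mem_range, Finset.mem_Ioo, BtwA, rr] at *
    split_ifs at * <;> omega
  · intro a ha
    simp only [Finset.mem_coe, Finset.mem_filter] at *
    simp only [Finset.mem_filter, Finset.mem_range, Finset.mem_Ioo, BtwA, rr] at *
    split_ifs at * <;> omega
  · intro a ha
    simp only [Finset.mem_coe, Finset.mem_filter] at *
    simp only [Finset.mem_filter, Finset.mem_range, Finset.mem_Ioo, BtwA, rr] at *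
    split_ifs at * <;> omega

lemma halving_iff {n i j : ℕ} (hn : 4 ≤ n) (hi : i < n) (hj : j < n) :
    Halving n i j ↔ ((n - 2) / 2 + 1 ≤ rr n i j ∧ rr n i j + (n - 2) / 2 + 1 ≤ n) := by
  have hn3 : 3 ≤ n := by omega
  have e1 : ((ngon n).filter (fun r =>
      0 < ((pt n j).1 - (pt n i).1) * (r.2 - (pt n i).2) -
        ((pt n j).2 - (pt n i).2) * (r.1 - (pt n i).1))).card = rr n i j - 1 := by
    rw [filter_ngon hn3]
    have heq : (Finset.range n).filter (fun k => 0 < cr (pt n i) (pt n j) (pt n k)) =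
        (Finset.range n).filter (fun k => BtwA n i j k) :=
      Finset.filter_congr (fun k hk => by
        exact cr_pos_iff hi hj (Finset.mem_range.1 hk))
    exact (congrArg Finset.card heq).trans (card_btw hi hj)
  have e2 : ((ngon n).filter (fun r =>
      ((pt n j).1 - (pt n i).1) * (r.2 - (pt n i).2) -
        ((pt n j).2 - (pt n i).2) * (r.1 - (pt n i).1) < 0)).card = rr n j i - 1 := by
    rw [filter_ngon hn3]
    have heq : (Finset.range n).filter (fun k => cr (pt n i) (pt n j) (pt n k) < 0) =
        (Finset.range n).filter (fun k => BtwA n j i k) :=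
      Finset.filter_congr (fun k hk => by
        exact cr_neg_iff hi hj (Finset.mem_range.1 hk))
    exact (congrArg Finset.card heq).trans (card_btw hj hi)
  rw [Halving, IsHalvingPts, ngon_card hn3, e1, e2]
  have hr1 : rr n i j < n := rr_lt hi hj
  have hr2 : rr n j i < n := rr_lt hj hi
  have hr3 : (i = j → rr n i j = 0 ∧ rr n j i = 0) ∧ (i ≠ j → rr n i j + rr n j i = n) := by
    constructor <;> (intro h; simp only [rr]; split_ifs <;> omega)
  by_cases hij : i = j
  · have := hr3.1 hij
    constructor
    · rintro ⟨h1, h2⟩; omega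
    · rintro ⟨h1, h2⟩; omega
  · have := hr3.2 hij
    constructor
    · rintro ⟨h1, h2⟩; omega
    · rintro ⟨h1, h2⟩; omega

lemma halving_ne {n c d : ℕ} (hn : 4 ≤ n) (hc : c < n) (hd : d < n)
    (h : Halving n c d) : c ≠ d := by
  intro he
  rw [halving_iff hn hc hd] at h
  subst he
  rw [rr_self] at h
  omega

lemma einter_comm {n a b c d : ℕ} (h : EInter n a b c d) : EInter n c d a b := by
  obtain ⟨x, h1, h2⟩ := h; exact ⟨x, h2, h1⟩
lemma einter_swap2 {n a b c d : ℕ} (h : EInter n a b d c) : EInter n a b c d := by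
  rw [EInter, show segment ℝ (pt n c) (pt n d) = segment ℝ (pt n d) (pt n c) from
    segment_symm ℝ _ _]
  exact h
lemma einter_swap1 {n a b c d : ℕ} (h : EInter n b a c d) : EInter n a b c d := by
  rw [EInter, show segment ℝ (pt n a) (pt n b) = segment ℝ (pt n b) (pt n a) from
    segment_symm ℝ _ _]
  exact h

lemma einter_share {n a b c d : ℕ}
    (h : pt n a = pt n c ∨ pt n a = pt n d ∨ pt n b = pt n c ∨ pt n b = pt n d) :
    EInter n a b c d := by
  rcases h with h | h | h | h
  · exact ⟨pt n a, left_mem_segment ℝ _ _, h ▸ left_mem_segment ℝ _ _⟩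
  · exact ⟨pt n a, left_mem_segment ℝ _ _, h ▸ right_mem_segment ℝ _ _⟩
  · exact ⟨pt n b, right_mem_segment ℝ _ _, h ▸ left_mem_segment ℝ _ _⟩
  · exact ⟨pt n b, right_mem_segment ℝ _ _, h ▸ right_mem_segment ℝ _ _⟩

lemma cross_idx {n i j a b : ℕ} (hi : i < n) (hj : j < n) (ha : a < n) (hb : b < n)
    (h1 : BtwA n i j a) (h2 : BtwA n j i b) : EInter n i j a b := by
  have hrj := rr_lt hi hj
  have hra := rr_lt hi ha
  have hrb := rr_lt hi hb
  rw [btw_pos hi hi hj ha] at h1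
  rw [btw_pos hi hj hi hb] at h2
  rw [rr_self] at h1 h2
  have key : BtwA n a b j ∧ BtwA n b a i := by
    rw [btw_pos hi ha hb hj, btw_pos hi hb ha hi, rr_self]
    simp only [inA] at *
    omega
  have c1 : 0 < cr (pt n i) (pt n j) (pt n a) := by
    rw [cr_pos_iff hi hj ha, btw_pos hi hi hj ha, rr_self]; exact h1
  have c2 : cr (pt n i) (pt n j) (pt n b) < 0 := by
    rw [cr_neg_iff hi hj hb, btw_pos hi hj hi hb, rr_self]; exact h2
  have c3 : cr (pt n a) (pt n b) (pt n i) < 0 := by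
    rw [cr_neg_iff ha hb hi]; exact key.2
  have c4 : 0 < cr (pt n a) (pt n b) (pt n j) := by
    rw [cr_pos_iff ha hb hj]; exact key.1
  exact cross_seg c1 c2 c3 c4

lemma sep_idx {n i j a b : ℕ} (hi : i < n) (hj : j < n) (ha : a < n) (hb : b < n)
    (h1 : BtwA n i j a) (h2 : BtwA n i j b) : ¬ EInter n i j a b := by
  have c1 : 0 < cr (pt n i) (pt n j) (pt n a) := (cr_pos_iff hi hj ha).2 h1
  have c2 : 0 < cr (pt n i) (pt n j) (pt n b) := (cr_pos_iff hi hj hb).2 h2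
  exact seg_disjoint c1 c2

lemma einter_cases {n a b c d : ℕ} (ha : a < n) (hb : b < n) (hc : c < n) (hd : d < n)
    (hab : a ≠ b) (hcd : c ≠ d) (h : EInter n a b c d) :
    (a = c ∨ a = d ∨ b = c ∨ b = d) ∨
    (BtwA n a b c ∧ BtwA n b a d) ∨ (BtwA n a b d ∧ BtwA n b a c) := by
  by_cases e1 : a = c; · exact Or.inl (Or.inl e1)
  by_cases e2 : a = d; · exact Or.inl (Or.inr (Or.inl e2))
  by_cases e3 : b = c; · exact Or.inl (Or.inr (Or.inr (Or.inl e3)))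
  by_cases e4 : b = d; · exact Or.inl (Or.inr (Or.inr (Or.inr e4)))
  rcases btw_trichotomy ha hb hc hab (Ne.symm e1) (Ne.symm e3) with hc' | hc' <;>
    rcases btw_trichotomy ha hb hd hab (Ne.symm e2) (Ne.symm e4) with hd' | hd'
  · exact absurd h (sep_idx ha hb hc hd hc' hd')
  · exact Or.inr (Or.inl ⟨hc', hd'⟩)
  · exact Or.inr (Or.inr ⟨hd', hc'⟩)
  · exact absurd (einter_swap1 (n := n) (a := b) (b := a) h) (sep_idx hb ha hc hd hc' hd')

lemma halving_cross {n i j a b : ℕ} (hn : 4 ≤ n) (hi : i < n) (hj : j < n)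
    (ha : a < n) (hb : b < n) (h1 : Halving n i j) (h2 : Halving n a b) :
    EInter n i j a b := by
  rw [halving_iff hn hi hj] at h1
  rw [halving_iff hn ha hb] at h2
  by_cases e1 : i = a; · exact einter_share (Or.inl (by rw [e1]))
  by_cases e2 : i = b; · exact einter_share (Or.inr (Or.inl (by rw [e2])))
  by_cases e3 : j = a; · exact einter_share (Or.inr (Or.inr (Or.inl (by rw [e3]))))
  by_cases e4 : j = b; · exact einter_share (Or.inr (Or.inr (Or.inr (by rw [e4]))))
  have main : (BtwA n i j a ∧ BtwA n j i b) ∨ (BtwA n i j b ∧ BtwA n j i a) := by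
    simp only [BtwA, rr] at h1 h2 ⊢
    split_ifs at * <;> omega
  rcases main with ⟨m1, m2⟩ | ⟨m1, m2⟩
  · exact cross_idx hi hj ha hb m1 m2
  · exact einter_swap2 (cross_idx hi hj hb ha m1 m2)

set_option maxHeartbeats 2000000 in
lemma key_arith {n D Z P Q W1 W2 : ℕ}
    (bD : 0 < D) (bD1 : D + 1 < n) (bZ : Z < n) (bP : P < n) (bQ : Q < n)
    (dZ0 : Z ≠ 0) (dZD : Z ≠ D) (dZD1 : Z ≠ D + 1) (dPQ : P ≠ Q)
    (hz : D + 2 ≤ Z)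
    (hw : (W1 = 0 ∧ W2 = D + 1) ∨ (W1 = 0 ∧ W2 = Z) ∨ (W1 = D ∧ W2 = Z))
    (hint : (inA P Q W1 ∧ inA Q P W2) ∨ (inA P Q W2 ∧ inA Q P W1)) :
    ((P = 0 ∨ Q = 0 ∨ P = D ∨ Q = D) ∨
      (inA P Q 0 ∧ inA Q P D) ∨ (inA P Q D ∧ inA Q P 0)) ∨
    ((P = D + 1 ∨ Q = D + 1 ∨ P = Z ∨ Q = Z) ∨
      (inA P Q (D + 1) ∧ inA Q P Z) ∨ (inA P Q Z ∧ inA Q P (D + 1))) := by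
  simp only [inA] at *
  omega

lemma pair_chord {n i j j1 k a b c d : ℕ} (hn : 4 ≤ n)
    (hi : i < n) (hj : j < n) (hj1 : j1 < n) (hk : k < n) (ha : a < n) (hb : b < n)
    (hij : i ≠ j) (hj1k : j1 ≠ k) (hab : a ≠ b)
    (hj1def : j1 = (j + 1) % n)
    (hne : ¬ EInter n i j j1 k)
    (hw : (c = i ∧ d = j1) ∨ (c = i ∧ d = k) ∨ (c = j ∧ d = k))
    (hinter : EInter n a b c d) :
    EInter n a b i j ∨ EInter n a b j1 k := by
  -- distinctness of the four pair-vertices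
  have dij1 : i ≠ j1 := fun h => hne (einter_share (Or.inl (by rw [h])))
  have dik : i ≠ k := fun h => hne (einter_share (Or.inr (Or.inl (by rw [h]))))
  have djj1 : j ≠ j1 := fun h => hne (einter_share (Or.inr (Or.inr (Or.inl (by rw [h])))))
  have djk : j ≠ k := fun h => hne (einter_share (Or.inr (Or.inr (Or.inr (by rw [h])))))
  -- position of j1 is one after position of j
  have f1 : rr n i j1 = rr n i j + 1 := by
    rcases (show j + 1 < n ∨ j + 1 = n by omega) with h | h
    · have hh : j1 = j + 1 := by rw [hj1def, Nat.mod_eq_of_lt h]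
      subst hh
      simp only [rr] at *
      split_ifs at * <;> omega
    · have hh : j1 = 0 := by rw [hj1def, h, Nat.mod_self]
      subst hh
      simp only [rr] at *
      split_ifs at * <;> omega
  -- basic position facts
  have bD : 0 < rr n i j :=
    Nat.pos_of_ne_zero (fun h => hij ((rr_zero_iff hi hj).1 h))
  have bD1 : rr n i j + 1 < n := by rw [← f1]; exact rr_lt hi hj1
  have bZ : rr n i k < n := rr_lt hi hk
  have bP : rr n i a < n := rr_lt hi ha
  have bQ : rr n i b < n := rr_lt hi hb
  have dZ0 : rr n i k ≠ 0 := fun h => dik ((rr_zero_iff hi hk).1 h)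
  have dZD : rr n i k ≠ rr n i j := fun h => djk ((rr_eq_iff hi hk hj).1 h).symm
  have dZD1 : rr n i k ≠ rr n i j + 1 := by
    rw [← f1]; exact fun h => hj1k (((rr_eq_iff hi hk hj1).1 h).symm)
  have dPQ : rr n i a ≠ rr n i b := fun h => hab ((rr_eq_iff hi ha hb).1 h)
  -- k is at least two past j
  have hz : rr n i j + 2 ≤ rr n i k := by
    have hni : ¬ (BtwA n i j k ∧ BtwA n j i j1) := fun ⟨x, y⟩ =>
      hne (einter_swap2 (cross_idx hi hj hk hj1 x y))
    rw [btw_pos hi hi hj hk, btw_pos hi hj hi hj1, rr_self, f1] at hni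
    simp only [inA] at hni
    omega
  -- decompose the chord/witness intersection
  have hcd : c ≠ d := by rcases hw with ⟨rfl, rfl⟩ | ⟨rfl, rfl⟩ | ⟨rfl, rfl⟩ <;> assumption
  have hc : c < n := by rcases hw with ⟨rfl, rfl⟩ | ⟨rfl, rfl⟩ | ⟨rfl, rfl⟩ <;> assumption
  have hd : d < n := by rcases hw with ⟨rfl, rfl⟩ | ⟨rfl, rfl⟩ | ⟨rfl, rfl⟩ <;> assumption
  rcases einter_cases ha hb hc hd hab hcd hinter with hsh | hint
  · -- chord shares an endpoint with the witness, hence with the pair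
    rcases hw with ⟨rfl, rfl⟩ | ⟨rfl, rfl⟩ | ⟨rfl, rfl⟩ <;>
      rcases hsh with h | h | h | h
    · exact Or.inl (einter_share (Or.inl (by rw [h])))
    · exact Or.inr (einter_share (Or.inl (by rw [h])))
    · exact Or.inl (einter_share (Or.inr (Or.inr (Or.inl (by rw [h])))))
    · exact Or.inr (einter_share (Or.inr (Or.inr (Or.inl (by rw [h])))))
    · exact Or.inl (einter_share (Or.inl (by rw [h])))
    · exact Or.inr (einter_share (Or.inr (Or.inl (by rw [h]))))
    · exact Or.inl (einter_share (Or.inr (Or.inr (Or.inl (by rw [h])))))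
    · exact Or.inr (einter_share (Or.inr (Or.inr (Or.inr (by rw [h])))))
    · exact Or.inl (einter_share (Or.inr (Or.inl (by rw [h]))))
    · exact Or.inr (einter_share (Or.inr (Or.inl (by rw [h]))))
    · exact Or.inl (einter_share (Or.inr (Or.inr (Or.inr (by rw [h])))))
    · exact Or.inr (einter_share (Or.inr (Or.inr (Or.inr (by rw [h])))))
  · -- chord crosses the witness
    have hint' : (inA (rr n i a) (rr n i b) (rr n i c) ∧ inA (rr n i b) (rr n i a) (rr n i d)) ∨
        (inA (rr n i a) (rr n i b) (rr n i d) ∧ inA (rr n i b) (rr n i a) (rr n i c)) := by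
      rw [← btw_pos hi ha hb hc, ← btw_pos hi hb ha hd,
          ← btw_pos hi ha hb hd, ← btw_pos hi hb ha hc]
      exact hint
    have hwpos : (rr n i c = 0 ∧ rr n i d = rr n i j + 1) ∨
        (rr n i c = 0 ∧ rr n i d = rr n i k) ∨
        (rr n i c = rr n i j ∧ rr n i d = rr n i k) := by
      rcases hw with ⟨e1, e2⟩ | ⟨e1, e2⟩ | ⟨e1, e2⟩
      · rw [e1, e2]; exact Or.inl ⟨rr_self n i, f1⟩
      · rw [e1, e2]; exact Or.inr (Or.inl ⟨rr_self n i, rfl⟩)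
      · rw [e1, e2]; exact Or.inr (Or.inr ⟨rfl, rfl⟩)
    have key := key_arith bD bD1 bZ bP bQ dZ0 dZD dZD1 dPQ hz hwpos hint'
    rcases key with (hcase | hcase | hcase) | (hcase | hcase | hcase)
    · rcases hcase with h | h | h | h
      · exact Or.inl (einter_share (Or.inl (by
          rw [show a = i from ((rr_zero_iff hi ha).1 h).symm])))
      · exact Or.inl (einter_share (Or.inr (Or.inr (Or.inl (by
          rw [show b = i from ((rr_zero_iff hi hb).1 h).symm])))))
      · exact Or.inl (einter_share (Or.inr (Or.inl (by
          rw [show a = j from (rr_eq_iff hi ha hj).1 h]))))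
      · exact Or.inl (einter_share (Or.inr (Or.inr (Or.inr (by
          rw [show b = j from (rr_eq_iff hi hb hj).1 h])))))
    · refine Or.inl (cross_idx ha hb hi hj ?_ ?_)
      · rw [btw_pos hi ha hb hi, rr_self]; exact hcase.1
      · rw [btw_pos hi hb ha hj]; exact hcase.2
    · refine Or.inl (einter_swap2 (cross_idx ha hb hj hi ?_ ?_))
      · rw [btw_pos hi ha hb hj]; exact hcase.1
      · rw [btw_pos hi hb ha hi, rr_self]; exact hcase.2
    · rcases hcase with h | h | h | h
      · exact Or.inr (einter_share (Or.inl (by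
          rw [show a = j1 from (rr_eq_iff hi ha hj1).1 (by rw [h, f1])])))
      · exact Or.inr (einter_share (Or.inr (Or.inr (Or.inl (by
          rw [show b = j1 from (rr_eq_iff hi hb hj1).1 (by rw [h, f1])])))))
      · exact Or.inr (einter_share (Or.inr (Or.inl (by
          rw [show a = k from (rr_eq_iff hi ha hk).1 h]))))
      · exact Or.inr (einter_share (Or.inr (Or.inr (Or.inr (by
          rw [show b = k from (rr_eq_iff hi hb hk).1 h])))))
    · refine Or.inr (cross_idx ha hb hj1 hk ?_ ?_)
      · rw [btw_pos hi ha hb hj1, f1]; exact hcase.1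
      · rw [btw_pos hi hb ha hk]; exact hcase.2
    · refine Or.inr (einter_swap2 (cross_idx ha hb hk hj1 ?_ ?_))
      · rw [btw_pos hi ha hb hk]; exact hcase.1
      · rw [btw_pos hi hb ha hj1, f1]; exact hcase.2

lemma ptm {n : ℕ} (hn : 1 ≤ n) (x : ℕ) : pt n (x % n) = pt n x := by
  have hn0 : (n:ℝ) ≠ 0 := by positivity
  have hang : 2 * Real.pi * ((x : ℕ) : ℝ) / n =
      2 * Real.pi * ((x % n : ℕ) : ℝ) / n + ((x / n : ℕ) : ℝ) * (2 * Real.pi) := by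
    have h := Nat.mod_add_div x n
    have h' : ((x % n : ℕ) : ℝ) + ((n : ℕ) : ℝ) * ((x / n : ℕ) : ℝ) = ((x : ℕ) : ℝ) := by
      exact_mod_cast congrArg (fun t : ℕ => (t : ℝ)) h
    rw [show ((x : ℕ) : ℝ) = ((x % n : ℕ) : ℝ) + ((x / n : ℕ) : ℝ) * (n : ℝ) from by
      linarith [h']]
    field_simp
  unfold pt
  rw [hang, Real.cos_add_nat_mul_two_pi, Real.sin_add_nat_mul_two_pi]

lemma einter_norm {n : ℕ} (hn : 1 ≤ n) (a b c d : ℕ) :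
    EInter n a b c d ↔ EInter n (a % n) (b % n) (c % n) (d % n) := by
  unfold EInter
  rw [ptm hn a, ptm hn b, ptm hn c, ptm hn d]

lemma mod_succ_mod (n j : ℕ) (hn : 2 ≤ n) : (j + 1) % n = (j % n + 1) % n := by
  conv_lhs => rw [Nat.add_mod]
  rw [Nat.mod_eq_of_lt (show 1 < n by omega)]

/-- normalized data extracted from a halving pair -/
lemma pair_norm {n i j k : ℕ} (hn : 3 ≤ n) (hp : HalvingPair n i j k) :
    i % n ≠ j % n ∧ (j + 1) % n ≠ k % n ∧
    ¬ EInter n (i % n) (j % n) ((j + 1) % n) (k % n) ∧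
    (i % n ≠ (j + 1) % n ∧ i % n ≠ k % n ∧ j % n ≠ (j + 1) % n ∧ j % n ≠ k % n) ∧
    ∃ c d, c < n ∧ d < n ∧ Halving n c d ∧
      ((c = i % n ∧ d = (j + 1) % n) ∨ (c = i % n ∧ d = k % n) ∨
        (c = j % n ∧ d = k % n)) := by
  obtain ⟨hij, hj1k, hne, hwit⟩ := hp
  have hn1 : 1 ≤ n := by omega
  have hIJ : i % n ≠ j % n := fun h => hij (by rw [← ptm hn1 i, ← ptm hn1 j, h])
  have hJ1K : (j + 1) % n ≠ k % n := fun h => hj1k (by rw [← ptm hn1 (j+1), ← ptm hn1 k, h])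
  have hneN : ¬ EInter n (i % n) (j % n) ((j + 1) % n) (k % n) := fun h =>
    hne ((einter_norm hn1 i j (j+1) k).2 h)
  refine ⟨hIJ, hJ1K, hneN, ⟨?_, ?_, ?_, ?_⟩, ?_⟩
  · exact fun h => hneN (einter_share (Or.inl (by rw [h])))
  · exact fun h => hneN (einter_share (Or.inr (Or.inl (by rw [h]))))
  · exact fun h => hneN (einter_share (Or.inr (Or.inr (Or.inl (by rw [h])))))
  · exact fun h => hneN (einter_share (Or.inr (Or.inr (Or.inr (by rw [h])))))
  · rcases hwit with h | h | h
    · exact ⟨i % n, (j + 1) % n, Nat.mod_lt _ (by omega), Nat.mod_lt _ (by omega),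
        (by unfold Halving; rw [ptm hn1 i, ptm hn1 (j+1)]; exact h), Or.inl ⟨rfl, rfl⟩⟩
    · exact ⟨i % n, k % n, Nat.mod_lt _ (by omega), Nat.mod_lt _ (by omega),
        (by unfold Halving; rw [ptm hn1 i, ptm hn1 k]; exact h), Or.inr (Or.inl ⟨rfl, rfl⟩)⟩
    · exact ⟨j % n, k % n, Nat.mod_lt _ (by omega), Nat.mod_lt _ (by omega),
        (by unfold Halving; rw [ptm hn1 j, ptm hn1 k]; exact h), Or.inr (Or.inr ⟨rfl, rfl⟩)⟩

/-- a halving pair forces `n ≥ 4` -/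
lemma pair_n4 {n i j k : ℕ} (hn : 3 ≤ n) (hp : HalvingPair n i j k) : 4 ≤ n := by
  obtain ⟨hIJ, hJ1K, _, ⟨d1, d2, d3, d4⟩, _⟩ := pair_norm hn hp
  rcases (show n = 3 ∨ 4 ≤ n by omega) with rfl | h
  · omega
  · exact h

/-- Part 1: a halving edge meets any halving pair. -/
lemma partA {n : ℕ} (hn : 3 ≤ n) (a b i j k : ℕ) (hab : pt n a ≠ pt n b)
    (hhal : Halving n a b) (hp : HalvingPair n i j k) :
    EInter n a b i j ∨ EInter n a b (j + 1) k := by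
  have hn1 : 1 ≤ n := by omega
  have hn4 : 4 ≤ n := pair_n4 hn hp
  obtain ⟨hIJ, hJ1K, hneN, _, c, d, hc, hd, hcdh, hw⟩ := pair_norm hn hp
  have hA : a % n < n := Nat.mod_lt _ (by omega)
  have hB : b % n < n := Nat.mod_lt _ (by omega)
  have hI : i % n < n := Nat.mod_lt _ (by omega)
  have hJ : j % n < n := Nat.mod_lt _ (by omega)
  have hJ1 : (j + 1) % n < n := Nat.mod_lt _ (by omega)
  have hK : k % n < n := Nat.mod_lt _ (by omega)
  have hABh : Halving n (a % n) (b % n) := by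
    unfold Halving; rw [ptm hn1 a, ptm hn1 b]; exact hhal
  have hAB : a % n ≠ b % n := fun h => hab (by rw [← ptm hn1 a, ← ptm hn1 b, h])
  have step : EInter n (a % n) (b % n) c d := halving_cross hn4 hA hB hc hd hABh hcdh
  have hj1def : (j + 1) % n = (j % n + 1) % n := mod_succ_mod n j (by omega)
  have final := pair_chord hn4 hI hJ hJ1 hK hA hB hIJ hJ1K hAB hj1def hneN hw step
  rcases final with h | h
  · exact Or.inl ((einter_norm hn1 a b i j).2 h)
  · exact Or.inr ((einter_norm hn1 a b (j + 1) k).2 h)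

/-- In a complete convex geometric graph of order `n`: any halving edge intersects any
halving pair, and any two halving pairs intersect. -/
theorem halving_pairs_intersect (n : ℕ) (hn : 3 ≤ n) :
    (∀ a b i j k : ℕ, pt n a ≠ pt n b → Halving n a b → HalvingPair n i j k →
      EInter n a b i j ∨ EInter n a b (j + 1) k) ∧
    (∀ i j k i' j' k' : ℕ, HalvingPair n i j k → HalvingPair n i' j' k' →
      EInter n i j i' j' ∨ EInter n i j (j' + 1) k' ∨
      EInter n (j + 1) k i' j' ∨ EInter n (j + 1) k (j' + 1) k') := by
  have hn1 : 1 ≤ n := by omega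
  constructor
  · exact fun a b i j k hab hh hp => partA hn a b i j k hab hh hp
  · intro i j k i' j' k' hp hp'
    have hn4 : 4 ≤ n := pair_n4 hn hp
    obtain ⟨hIJ, hJ1K, hneN, -, c, d, hc, hd, hcdh, hw⟩ := pair_norm hn hp
    have hcd : c ≠ d := halving_ne hn4 hc hd hcdh
    have hcdp : pt n c ≠ pt n d := fun h => hcd (pt_inj hn hc hd h)
    have step1 := partA hn c d i' j' k' hcdp hcdh hp'
    have hI : i % n < n := Nat.mod_lt _ (by omega)
    have hJ : j % n < n := Nat.mod_lt _ (by omega)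
    have hJ1 : (j + 1) % n < n := Nat.mod_lt _ (by omega)
    have hK : k % n < n := Nat.mod_lt _ (by omega)
    have hI' : i' % n < n := Nat.mod_lt _ (by omega)
    have hJ' : j' % n < n := Nat.mod_lt _ (by omega)
    have hJ1' : (j' + 1) % n < n := Nat.mod_lt _ (by omega)
    have hK' : k' % n < n := Nat.mod_lt _ (by omega)
    obtain ⟨hIJ', hJ1K', hneN', -, -⟩ := pair_norm hn hp'
    have hj1def : (j + 1) % n = (j % n + 1) % n := mod_succ_mod n j (by omega)
    rcases step1 with h | h
    · have h2 : EInter n (i' % n) (j' % n) c d := by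
        have h3 := (einter_norm hn1 i' j' c d).1 (einter_comm h)
        rwa [Nat.mod_eq_of_lt hc, Nat.mod_eq_of_lt hd] at h3
      have final := pair_chord hn4 hI hJ hJ1 hK hI' hJ' hIJ hJ1K hIJ' hj1def hneN hw h2
      rcases final with g | g
      · exact Or.inl ((einter_norm hn1 i j i' j').2 (einter_comm g))
      · exact Or.inr (Or.inr (Or.inl ((einter_norm hn1 (j + 1) k i' j').2 (einter_comm g))))
    · have h2 : EInter n ((j' + 1) % n) (k' % n) c d := by
        have h3 := (einter_norm hn1 (j' + 1) k' c d).1 (einter_comm h)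
        rwa [Nat.mod_eq_of_lt hc, Nat.mod_eq_of_lt hd] at h3
      have final := pair_chord hn4 hI hJ hJ1 hK hJ1' hK' hIJ hJ1K hJ1K' hj1def hneN hw h2
      rcases final with g | g
      · exact Or.inr (Or.inl ((einter_norm hn1 i j (j' + 1) k').2 (einter_comm g)))
      · exact Or.inr (Or.inr (Or.inr ((einter_norm hn1 (j + 1) k (j' + 1) k').2
          (einter_comm g))))
end
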